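/- Let H be a finite-dimensional complex inner product space of dimension N, let F = {f_i}_{i=1}^M be a frame for H (i.e., the f_i span H), with frame operator S defined by S f = ∑_{i=1}^M ⟨f, f_i⟩ f_i (which is then positive and invertible), and let {q_i}_{i=1}^M be positive real weights. Set c² = max_{1 ≤ i ≤ M} q_i ⟨f_i, S⁻¹ f_i⟩, let Λ₁ = { i : q_i ⟨f_i, S⁻¹ f_i⟩ = c² } and Λ₂ = {1,…,M} \ Λ₁, and let H₁ = span{f_i : i ∈ Λ₁}, H₂ = span{f_i : i ∈ Λ₂}. If H₁ ∩ H₂ = {0}, then for every dual frame G = {g_i}_{i=1}^M of F (i.e., ∑_{i=1}^M ⟨f, f_i⟩ g_i = f for all f ∈ H), one has max_{1 ≤ i ≤ M} q_i |⟨f_i, g_i⟩| ≥ c². In other words, the canonical dual {S⁻¹ f_i}_{i=1}^M is a 1-erasure probability optimal dual of F. -/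

import Mathlib

/-- corrected Theorem 1: Let `F = {f_i}_{i=1}^M` be a frame for an
`N`-dimensional complex inner product space `H` with frame operator `S` (a linear
automorphism with `S f = ∑ i, ⟨f, f_i⟩ f_i`), and let `{q_i}` be positive weights.  With
`c² = max_i q_i ⟨f_i, S⁻¹ f_i⟩`, `Λ₁ = {i : q_i ⟨f_i, S⁻¹ f_i⟩ = c²}`, `Λ₂` its
complement, and `H_j = span{f_i : i ∈ Λ_j}`: if `H₁ ⊓ H₂ = {0}`, then every dual `G` of
`F` satisfies `max_i q_i |⟨f_i, g_i⟩| ≥ c²`; i.e. the canonical dual is a 1-erasure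
probability optimal dual.  The paper's inner product `⟨a, b⟩` (linear in the first
argument) is Mathlib's `⟪b, a⟫_ℂ`; note `⟨f_i, S⁻¹ f_i⟩ = ‖S^{-1/2} f_i‖²` is a positive
real, realized here as the real part. -/
theorem canonical_dual_prob_optimal_of_trivial_intersection
    {H : Type*} [NormedAddCommGroup H] [InnerProductSpace ℂ H] [FiniteDimensional ℂ H]
    {N M : ℕ} (hM : 0 < M) (hN : Module.finrank ℂ H = N)
    (F : Fin M → H) (hF : Submodule.span ℂ (Set.range F) = ⊤)
    (S : H ≃ₗ[ℂ] H) (hS : ∀ f : H, S f = ∑ i, (inner ℂ (F i) f : ℂ) • F i)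
    (q : Fin M → ℝ) (hq : ∀ i, 0 < q i)
    (c2 : ℝ) (hc2 : c2 = ⨆ i, q i * (inner ℂ (S.symm (F i)) (F i) : ℂ).re)
    (Λ₁ : Set (Fin M))
    (hΛ₁ : Λ₁ = {i | q i * (inner ℂ (S.symm (F i)) (F i) : ℂ).re = c2})
    (H₁ H₂ : Submodule ℂ H)
    (hH₁ : H₁ = Submodule.span ℂ (F '' Λ₁))
    (hH₂ : H₂ = Submodule.span ℂ (F '' Λ₁ᶜ))
    (hint : H₁ ⊓ H₂ = ⊥)
    (G : Fin M → H) (hG : ∀ f : H, ∑ i, (inner ℂ (F i) f : ℂ) • G i = f) :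
    c2 ≤ ⨆ i, q i * ‖(inner ℂ (G i) (F i) : ℂ)‖ := by
  classical
  set u : Fin M → H := fun i => G i - S.symm (F i) with hu
  have hcan : ∀ f : H, ∑ i, (inner ℂ (F i) f : ℂ) • S.symm (F i) = f := by
    intro f
    have h := congrArg S.symm (hS f)
    simpa [map_sum, map_smul] using h.symm
  have hTu : ∀ f : H, ∑ i, (inner ℂ (F i) f : ℂ) • u i = 0 := by
    intro f
    simp only [hu, smul_sub, Finset.sum_sub_distrib, hG f, hcan f, sub_self]
  have hadj : ∀ h : H, ∑ i, (inner ℂ (u i) h : ℂ) • F i = 0 := by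
    intro h
    apply ext_inner_right ℂ
    intro f
    rw [sum_inner, inner_zero_left]
    have h1 : (inner ℂ h (∑ i, (inner ℂ (F i) f : ℂ) • u i) : ℂ) = 0 := by
      rw [hTu f, inner_zero_right]
    rw [inner_sum] at h1
    simp only [inner_smul_left, inner_smul_right] at h1 ⊢
    calc ∑ i, (starRingEnd ℂ) (inner ℂ (u i) h) * inner ℂ (F i) f
        = ∑ i, (inner ℂ (F i) f : ℂ) * inner ℂ h (u i) := by
          refine Finset.sum_congr rfl fun i _ => ?_
          rw [inner_conj_symm]
          ring
      _ = 0 := h1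
  set s : Finset (Fin M) := Finset.univ.filter (· ∈ Λ₁) with hs
  have hA : ∀ h : H, ∑ i ∈ s, (inner ℂ (u i) h : ℂ) • F i = 0 := by
    intro h
    have hsplit : ∑ i ∈ s, (inner ℂ (u i) h : ℂ) • F i
        + ∑ i ∈ sᶜ, (inner ℂ (u i) h : ℂ) • F i = 0 := by
      rw [Finset.sum_add_sum_compl]
      exact hadj h
    have hA1 : (∑ i ∈ s, (inner ℂ (u i) h : ℂ) • F i) ∈ H₁ := by
      rw [hH₁]
      refine Submodule.sum_mem _ fun i hi => Submodule.smul_mem _ _ (Submodule.subset_span ?_)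
      exact ⟨i, by simpa [hs] using hi, rfl⟩
    have hA2 : (∑ i ∈ s, (inner ℂ (u i) h : ℂ) • F i) ∈ H₂ := by
      have : (∑ i ∈ s, (inner ℂ (u i) h : ℂ) • F i)
          = - ∑ i ∈ sᶜ, (inner ℂ (u i) h : ℂ) • F i := by
        exact eq_neg_of_add_eq_zero_left hsplit
      rw [this, hH₂]
      refine Submodule.neg_mem _ ?_
      refine Submodule.sum_mem _ fun i hi => Submodule.smul_mem _ _ (Submodule.subset_span ?_)
      refine ⟨i, ?_, rfl⟩
      simpa [hs] using hi
    have : (∑ i ∈ s, (inner ℂ (u i) h : ℂ) • F i) ∈ H₁ ⊓ H₂ := ⟨hA1, hA2⟩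
    rw [hint] at this
    simpa using this
  have htrace : ∑ i ∈ s, (inner ℂ (u i) (F i) : ℂ) = 0 := by
    set b := stdOrthonormalBasis ℂ H with hb
    have hexp : ∀ i, (inner ℂ (u i) (F i) : ℂ)
        = ∑ k, (inner ℂ (u i) (b k) : ℂ) * inner ℂ (b k) (F i) :=
      fun i => (b.sum_inner_mul_inner _ _).symm
    rw [Finset.sum_congr rfl fun i _ => hexp i, Finset.sum_comm]
    apply Finset.sum_eq_zero
    intro k _
    have hz : (inner ℂ (b k) (∑ i ∈ s, (inner ℂ (u i) (b k) : ℂ) • F i) : ℂ) = 0 := by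
      rw [hA (b k), inner_zero_right]
    rw [inner_sum] at hz
    simp only [inner_smul_right] at hz
    simpa [mul_comm] using hz
  have hsum_eq : ∑ i ∈ s, (inner ℂ (G i) (F i) : ℂ)
      = ∑ i ∈ s, (inner ℂ (S.symm (F i)) (F i) : ℂ) := by
    have h := htrace
    simp only [hu, inner_sub_left, Finset.sum_sub_distrib] at h
    exact sub_eq_zero.mp h
  have hne : Nonempty (Fin M) := ⟨⟨0, hM⟩⟩
  obtain ⟨i0, hi0⟩ := Finite.exists_max (fun i => q i * (inner ℂ (S.symm (F i)) (F i) : ℂ).re)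
  have hc2i0 : q i0 * (inner ℂ (S.symm (F i0)) (F i0) : ℂ).re = c2 := by
    rw [hc2]
    exact le_antisymm (le_ciSup (f := fun i => q i * (inner ℂ (S.symm (F i)) (F i) : ℂ).re) (Set.Finite.bddAbove (Set.finite_range _)) i0) (ciSup_le hi0)
  have hi0s : i0 ∈ s := by simp [hs, hΛ₁, hc2i0]
  by_contra hlt
  push_neg at hlt
  have hm : ∀ i, q i * ‖(inner ℂ (G i) (F i) : ℂ)‖
      ≤ ⨆ i, q i * ‖(inner ℂ (G i) (F i) : ℂ)‖ :=
    fun i => le_ciSup (f := fun i => q i * ‖(inner ℂ (G i) (F i) : ℂ)‖) (Set.Finite.bddAbove (Set.finite_range _)) i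
  have key : ∀ i ∈ s, (inner ℂ (G i) (F i) : ℂ).re < (inner ℂ (S.symm (F i)) (F i) : ℂ).re := by
    intro i hi
    have hiΛ : q i * (inner ℂ (S.symm (F i)) (F i) : ℂ).re = c2 := by
      have := hi; simp only [hs, Finset.mem_filter, Finset.mem_univ, true_and] at this
      rw [hΛ₁] at this; exact this
    have h1 : q i * (inner ℂ (G i) (F i) : ℂ).re ≤ q i * ‖(inner ℂ (G i) (F i) : ℂ)‖ :=
      mul_le_mul_of_nonneg_left (Complex.re_le_norm _) (hq i).le
    have h2 : q i * (inner ℂ (G i) (F i) : ℂ).re < q i * (inner ℂ (S.symm (F i)) (F i) : ℂ).re := by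
      rw [hiΛ]
      exact lt_of_le_of_lt (h1.trans (hm i)) hlt
    exact lt_of_mul_lt_mul_left h2 (hq i).le
  have hstrict : ∑ i ∈ s, (inner ℂ (G i) (F i) : ℂ).re
      < ∑ i ∈ s, (inner ℂ (S.symm (F i)) (F i) : ℂ).re :=
    Finset.sum_lt_sum_of_nonempty ⟨i0, hi0s⟩ key
  have hre : ∑ i ∈ s, (inner ℂ (G i) (F i) : ℂ).re
      = ∑ i ∈ s, (inner ℂ (S.symm (F i)) (F i) : ℂ).re := by
    have := congrArg Complex.re hsum_eq
    simpa [Complex.re_sum] using this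
  exact absurd hre (ne_of_lt hstrict)
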